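/- Let (G, μ) carry an automatic structure with language L, let H ≤ G be an L-quasi-convex subgroup, and let u₀ ∈ Ã* be any word. Then the language L ∩ μ⁻¹(H·μ(u₀)) = { v ∈ L : μ(v) ∈ H·μ(u₀) } (the set of all L-representatives of elements of the right coset H·μ(u₀)) is regular. -/

import Mathlib

open List

/-- A word over the alphabet Ã = A ∪ A⁻¹ is a `List (A × Bool)`: the letter `(a, true)`
stands for `a` and `(a, false)` for the formal inverse `a⁻¹`. A word is *reduced* if it
has no factor `a·a⁻¹` or `a⁻¹·a`. -/
def Reduced {A : Type*} (w : List (A × Bool)) : Prop :=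
  w.Chain' fun p q => ¬(p.1 = q.1 ∧ q.2 = !p.2)

variable {A : Type*} [Fintype A] {G : Type*} [Group G]

/-- Evaluation in `G` of a word over Ã, determined by the images `f a` of the letters.
This is the (inverse-respecting) monoid homomorphism μ : Ã* → G. -/
def eval (f : A → G) (w : List (A × Bool)) : G :=
  (w.map fun p => if p.2 then f p.1 else (f p.1)⁻¹).prod

/-- Word length of `g ∈ G` with respect to the generators `A`:
the least length of a word over Ã mapping onto `g`. -/
noncomputable def wlen (f : A → G) (g : G) : ℕ :=
  sInf {n | ∃ w : List (A × Bool), eval f w = g ∧ w.length = n}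

/-- A rational structure: `L` is a regular language of reduced words with μ(L) = G. -/
def RationalStructure (f : A → G) (L : Set (List (A × Bool))) : Prop :=
  Language.IsRegular (L : Language (A × Bool)) ∧ (∀ w ∈ L, Reduced w) ∧
    ∀ g : G, ∃ w ∈ L, eval f w = g

/-- `H` is L-quasi-convex with constant `k`: for every `w ∈ L` with `μ(w) ∈ H` and
every prefix `u` of `w`, there is `h ∈ H` with `|h⁻¹ μ(u)| ≤ k`. -/
def QCW (f : A → G) (L : Set (List (A × Bool))) (H : Subgroup G) (k : ℕ) : Prop :=
  ∀ w ∈ L, eval f w ∈ H → ∀ u, u <+: w → ∃ h ∈ H, wlen f (h⁻¹ * eval f u) ≤ k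

/-- The set of right cosets `H·μ(u)` where `u` ranges over prefixes of words
`w ∈ L` with `μ(w) ∈ H` (the vertex set of the Stallings graph Γ_L(H)). -/
def VL (f : A → G) (L : Set (List (A × Bool))) (H : Subgroup G) : Set (Set G) :=
  {S | ∃ w ∈ L, eval f w ∈ H ∧ ∃ u, u <+: w ∧ S = {x | ∃ h ∈ H, x = h * eval f u}}

/-- Padded convolution of two words: align letter by letter, padding the shorter
word on the right with the padding symbol □ (here `none`). -/
def conv {α : Type*} (u v : List α) : List (Option α × Option α) :=
  List.zip (u.map some ++ List.replicate (v.length - u.length) none)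
           (v.map some ++ List.replicate (u.length - v.length) none)

/-- An automatic structure on (G, μ) with language L: L is a regular language of
reduced words with μ(L) = G, and for every letter a ∈ Ã ∪ {1} (encoded as an
`Option (A × Bool)`), the padded convolution language
{ conv(u,v) : u, v ∈ L, μ(u·a) = μ(v) } is regular. -/
def AutomaticStructure (f : A → G) (L : Set (List (A × Bool))) : Prop :=
  Language.IsRegular (L : Language (A × Bool)) ∧ (∀ w ∈ L, Reduced w) ∧
    (∀ g : G, ∃ w ∈ L, eval f w = g) ∧
    ∀ x : Option (A × Bool),
      Language.IsRegular
        ({c | ∃ u ∈ L, ∃ v ∈ L, c = conv u v ∧ eval f (u ++ x.toList) = eval f v} :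
          Language (Option (A × Bool) × Option (A × Bool)))

set_option linter.unusedSectionVars false

namespace Stmt9Aux


theorem eval_append (f : A → G) (x y : List (A × Bool)) :
    eval f (x ++ y) = eval f x * eval f y := by
  simp [eval]

theorem eval_nil (f : A → G) : eval f ([] : List (A × Bool)) = 1 := rfl

/-- formal inverse of a word -/
def winv {A : Type*} (w : List (A × Bool)) : List (A × Bool) :=
  (w.map fun p => (p.1, !p.2)).reverse

theorem eval_winv (f : A → G) (w : List (A × Bool)) :
    eval f (winv w) = (eval f w)⁻¹ := by
  induction w with
  | nil => simp [winv, eval]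
  | cons a w ih =>
    have h1 : winv (a :: w) = winv w ++ [(a.1, !a.2)] := by
      simp [winv]
    have h2 : (a :: w) = [a] ++ w := rfl
    rw [h1, eval_append, ih, h2, eval_append]
    have : eval f [(a.1, !a.2)] = (eval f [a])⁻¹ := by
      cases a with
      | mk x b => cases b <;> simp [eval]
    rw [this, mul_inv_rev]

theorem length_winv {A : Type*} (w : List (A × Bool)) : (winv w).length = w.length := by
  simp [winv]

theorem wlen_le (f : A → G) {g : G} {w : List (A × Bool)} (h : eval f w = g) :
    wlen f g ≤ w.length :=
  Nat.sInf_le ⟨w, h, rfl⟩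

theorem exists_word (f : A → G) (hs : ∀ g : G, ∃ w, eval f w = g) (g : G) :
    ∃ w : List (A × Bool), eval f w = g ∧ w.length = wlen f g := by
  have hne : {n | ∃ w : List (A × Bool), eval f w = g ∧ w.length = n}.Nonempty := by
    obtain ⟨w, hw⟩ := hs g
    exact ⟨w.length, w, hw, rfl⟩
  exact Nat.sInf_mem hne

theorem wlen_mul_le (f : A → G) (hs : ∀ g : G, ∃ w, eval f w = g) (g h : G) :
    wlen f (g * h) ≤ wlen f g + wlen f h := by
  obtain ⟨w1, hw1, hl1⟩ := exists_word f hs g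
  obtain ⟨w2, hw2, hl2⟩ := exists_word f hs h
  have : eval f (w1 ++ w2) = g * h := by rw [eval_append, hw1, hw2]
  calc wlen f (g * h) ≤ (w1 ++ w2).length := wlen_le f this
    _ = wlen f g + wlen f h := by rw [List.length_append, hl1, hl2]

theorem ball_finite (f : A → G) (hs : ∀ g : G, ∃ w, eval f w = g) (K : ℕ) :
    {g : G | wlen f g ≤ K}.Finite := by
  have h1 : {w : List (A × Bool) | w.length ≤ K}.Finite := List.finite_length_le _ K
  apply Set.Finite.subset (h1.image (eval f))
  intro g hg
  obtain ⟨w, hw, hlw⟩ := Stmt9Aux.exists_word f hs g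
  exact ⟨w, by rw [Set.mem_setOf_eq, hlw]; exact hg, hw⟩



theorem exists_short_accepts {α σ : Type*} [Fintype σ] (M : DFA α σ) :
    ∀ x ∈ M.accepts, ∃ y ∈ M.accepts, y.length < Fintype.card σ := by
  suffices h : ∀ n, ∀ x, x.length = n → x ∈ M.accepts →
      ∃ y ∈ M.accepts, y.length < Fintype.card σ by
    intro x hx; exact h x.length x rfl hx
  intro n
  induction n using Nat.strong_induction_on with
  | _ n ih =>
    intro x hn hx
    subst hn
    by_cases hlt : x.length < Fintype.card σ
    · exact ⟨x, hx, hlt⟩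
    · push_neg at hlt
      obtain ⟨a, b, c, hxabc, hab, hbne, hsub⟩ := M.pumping_lemma hx hlt
      have hac : a ++ c ∈ M.accepts := by
        apply hsub
        show a ++ c ∈ ({a} * KStar.kstar {b} * {c} : Language α)
        rw [Language.mem_mul]
        refine ⟨a, ?_, c, rfl, rfl⟩
        rw [Language.mem_mul]
        exact ⟨a, rfl, [], Language.nil_mem_kstar _, by simp⟩
      have hlen : (a ++ c).length < x.length := by
        subst hxabc
        simp only [List.length_append]
        have := List.length_pos_iff.2 hbne
        omega
      exact ih _ hlen _ rfl hac

theorem exists_short_completion {α σ : Type*} [Fintype σ] (M : DFA α σ) {x : List α}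
    (hx : x ∈ M.accepts) (t : ℕ) :
    ∃ y : List α, x.take t ++ y ∈ M.accepts ∧ y.length < Fintype.card σ := by
  let M' : DFA α σ := ⟨M.step, M.evalFrom M.start (x.take t), M.accept⟩
  have hdrop : x.drop t ∈ M'.accepts := by
    have : M.eval x ∈ M.accept := hx
    rw [DFA.mem_accepts]
    show M'.evalFrom (M.evalFrom M.start (x.take t)) (x.drop t) ∈ M.accept
    have hsplit : M.evalFrom M.start (x.take t ++ x.drop t) ∈ M.accept := by
      rwa [List.take_append_drop]
    rwa [DFA.evalFrom_of_append] at hsplit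
  obtain ⟨y, hy, hlen⟩ := exists_short_accepts M' _ hdrop
  refine ⟨y, ?_, hlen⟩
  rw [DFA.mem_accepts, DFA.eval, DFA.evalFrom_of_append]
  exact hy

theorem length_conv {α : Type*} (u v : List α) :
    (conv u v).length = max u.length v.length := by
  simp [conv, List.length_zip]
  omega

theorem conv_fst {α : Type*} (u v : List α) :
    (conv u v).map Prod.fst = u.map some ++ List.replicate (v.length - u.length) none := by
  apply List.map_fst_zip
  simp; omega

theorem conv_snd {α : Type*} (u v : List α) :
    (conv u v).map Prod.snd = v.map some ++ List.replicate (u.length - v.length) none := by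
  apply List.map_snd_zip
  simp; omega

theorem reduceOption_take_pad {α : Type*} (u : List α) (m t : ℕ) :
    ((u.map some ++ List.replicate m none).take t).reduceOption = u.take t := by
  rw [List.take_append, List.reduceOption_append, ← List.map_take]
  have h1 : (List.map some (u.take t)).reduceOption = u.take t := by
    induction (u.take t) with
    | nil => rfl
    | cons a l ih => simp [ih]
  have h2 : ((List.replicate m (none : Option α)).take (t - (u.map some).length)).reduceOption
      = [] := by
    rw [List.take_replicate]
    induction (min (t - (u.map some).length) m) with
    | zero => rfl
    | succ n ih => simpa using ih
  rw [h1, h2, List.append_nil]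


theorem conv_take_fst {α : Type*} (u v : List α) (t : ℕ) :
    (((conv u v).take t).map Prod.fst).reduceOption = u.take t := by
  rw [List.map_take, conv_fst, reduceOption_take_pad]

theorem conv_take_snd {α : Type*} (u v : List α) (t : ℕ) :
    (((conv u v).take t).map Prod.snd).reduceOption = v.take t := by
  rw [List.map_take, conv_snd, reduceOption_take_pad]

theorem quad {a b c d : G} (h : a * b = c * d) : a⁻¹ * c = b * d⁻¹ := by
  have := congrArg (fun z => a⁻¹ * z * d⁻¹) h
  simpa [mul_assoc] using this.symm

theorem ft_letter (f : A → G) (L : Set (List (A × Bool))) (x : Option (A × Bool))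
    {σ : Type} [Fintype σ] (N : DFA (Option (A × Bool) × Option (A × Bool)) σ)
    (hN : N.accepts = {c | ∃ u ∈ L, ∃ v ∈ L, c = conv u v ∧
      eval f (u ++ x.toList) = eval f v})
    {u v : List (A × Bool)} (hu : u ∈ L) (hv : v ∈ L)
    (heq : eval f (u ++ x.toList) = eval f v) (t : ℕ) :
    wlen f ((eval f (u.take t))⁻¹ * eval f (v.take t)) ≤ 2 * Fintype.card σ + 1 := by
  have hxl : x.toList.length ≤ 1 := by cases x <;> simp
  by_cases ht : max u.length v.length ≤ t
  · rw [List.take_of_length_le (le_trans (le_max_left _ _) ht),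
      List.take_of_length_le (le_trans (le_max_right _ _) ht)]
    have : (eval f u)⁻¹ * eval f v = eval f x.toList := by
      rw [← heq, eval_append]; group
    calc wlen f ((eval f u)⁻¹ * eval f v) ≤ x.toList.length := wlen_le f this.symm
      _ ≤ 2 * Fintype.card σ + 1 := by omega
  · push_neg at ht
    have hconv : conv u v ∈ N.accepts := by
      rw [hN]; exact ⟨u, hu, v, hv, rfl, heq⟩
    obtain ⟨y, hacc, hylen⟩ := exists_short_completion N hconv t
    rw [hN] at hacc
    obtain ⟨u'', hu'', v'', hv'', hcv, heq''⟩ := hacc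
    have hlt : ((conv u v).take t).length = t := by
      rw [List.length_take, length_conv]; omega
    have hlc : (conv u'' v'').length = t + y.length := by
      rw [← hcv, List.length_append, hlt]
    have htake : (conv u'' v'').take t = (conv u v).take t := by
      rw [← hcv, List.take_append_of_le_length (by omega), List.take_take, min_self]
    have hut : u''.take t = u.take t := by
      rw [← conv_take_fst u'' v'' t, htake, conv_take_fst]
    have hvt : v''.take t = v.take t := by
      rw [← conv_take_snd u'' v'' t, htake, conv_take_snd]
    have hlu'' : u''.length ≤ t + y.length := by
      have := length_conv u'' v''; omega
    have hlv'' : v''.length ≤ t + y.length := by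
      have := length_conv u'' v''; omega
    have E : eval f (u''.take t) * (eval f (u''.drop t) * eval f x.toList)
        = eval f (v''.take t) * eval f (v''.drop t) := by
      have h1 : eval f u'' = eval f (u''.take t) * eval f (u''.drop t) := by
        rw [← eval_append, List.take_append_drop]
      have h2 : eval f v'' = eval f (v''.take t) * eval f (v''.drop t) := by
        rw [← eval_append, List.take_append_drop]
      have h3 : eval f u'' * eval f x.toList = eval f v'' := by rw [← eval_append, heq'']
      rw [← mul_assoc, ← h1, ← h2, h3]
    have hW : eval f (u''.drop t ++ (x.toList ++ winv (v''.drop t)))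
        = (eval f (u.take t))⁻¹ * eval f (v.take t) := by
      rw [← hut, ← hvt, quad E, eval_append, eval_append, eval_winv, mul_assoc]
    calc wlen f ((eval f (u.take t))⁻¹ * eval f (v.take t))
        ≤ (u''.drop t ++ (x.toList ++ winv (v''.drop t))).length := wlen_le f hW
      _ ≤ 2 * Fintype.card σ + 1 := by
          simp only [List.length_append, length_winv, List.length_drop]
          omega

theorem ft_all (f : A → G) (L : Set (List (A × Bool)))
    (h4 : ∀ x : Option (A × Bool),
      Language.IsRegular
        ({c | ∃ u ∈ L, ∃ v ∈ L, c = conv u v ∧ eval f (u ++ x.toList) = eval f v} :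
          Language (Option (A × Bool) × Option (A × Bool)))) :
    ∃ k₁ : ℕ, ∀ x : Option (A × Bool), ∀ u ∈ L, ∀ v ∈ L,
      eval f (u ++ x.toList) = eval f v →
      ∀ t, wlen f ((eval f (u.take t))⁻¹ * eval f (v.take t)) ≤ k₁ := by
  have step : ∀ x : Option (A × Bool), ∃ kx : ℕ, ∀ u ∈ L, ∀ v ∈ L,
      eval f (u ++ x.toList) = eval f v →
      ∀ t, wlen f ((eval f (u.take t))⁻¹ * eval f (v.take t)) ≤ kx := by
    intro x
    obtain ⟨σ, hfin, N, hN⟩ := h4 x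
    exact ⟨2 * Fintype.card σ + 1, fun u hu v hv heq t =>
      ft_letter f L x N hN hu hv heq t⟩
  choose kfun hkfun using step
  refine ⟨Finset.univ.sup kfun, fun x u hu v hv heq t => ?_⟩
  exact le_trans (hkfun x u hu v hv heq t) (Finset.le_sup (Finset.mem_univ x))


theorem prefix_near (f : A → G) (L : Set (List (A × Bool))) (H : Subgroup G)
    (hs : ∀ g : G, ∃ w ∈ L, eval f w = g)
    {k : ℕ} (hq : QCW f L H k)
    {k₁ : ℕ} (hft : ∀ x : Option (A × Bool), ∀ u ∈ L, ∀ v ∈ L,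
      eval f (u ++ x.toList) = eval f v →
      ∀ t, wlen f ((eval f (u.take t))⁻¹ * eval f (v.take t)) ≤ k₁)
    (u₀ : List (A × Bool)) {v : List (A × Bool)} (hv : v ∈ L)
    {h₀ : G} (hh₀ : h₀ ∈ H) (hval : eval f v = h₀ * eval f u₀) (t : ℕ) :
    ∃ h ∈ H, wlen f (h⁻¹ * eval f (v.take t)) ≤ k + (u₀.length + 1) * k₁ := by
  have hs0 : ∀ g : G, ∃ w, eval f w = g := fun g => by
    obtain ⟨w, _, hw⟩ := hs g; exact ⟨w, hw⟩
  obtain ⟨w, hw, hwval⟩ := hs h₀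
  have claim : ∀ i, i ≤ u₀.length → ∃ wi ∈ L,
      eval f wi = h₀ * eval f (u₀.take i) ∧
      ∀ s, wlen f ((eval f (w.take s))⁻¹ * eval f (wi.take s)) ≤ i * k₁ := by
    intro i
    induction i with
    | zero =>
      intro _
      refine ⟨w, hw, by rw [List.take_zero, eval_nil, mul_one]; exact hwval, fun s => ?_⟩
      simp only [inv_mul_cancel, Nat.zero_mul]
      exact wlen_le f (eval_nil f)
    | succ i ih =>
      intro hsucc
      obtain ⟨wi, hwi, hwiv, hwit⟩ := ih (Nat.le_of_succ_le hsucc)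
      have hi' : i < u₀.length := hsucc
      obtain ⟨w', hw', hw'val⟩ := hs (h₀ * eval f (u₀.take (i + 1)))
      have htk : u₀.take (i + 1) = u₀.take i ++ [u₀[i]] := by
        rw [List.take_succ, List.getElem?_eq_getElem hi']
        rfl
      have hkey : eval f (wi ++ (some u₀[i]).toList) = eval f w' := by
        show eval f (wi ++ [u₀[i]]) = eval f w'
        rw [eval_append, hwiv, hw'val, htk, eval_append, mul_assoc]
      have hft' := hft (some u₀[i]) wi hwi w' hw' hkey
      refine ⟨w', hw', hw'val, fun s => ?_⟩
      have hdecomp : (eval f (w.take s))⁻¹ * eval f (w'.take s)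
          = ((eval f (w.take s))⁻¹ * eval f (wi.take s)) *
            ((eval f (wi.take s))⁻¹ * eval f (w'.take s)) := by group
      rw [hdecomp]
      calc wlen f _ ≤ wlen f ((eval f (w.take s))⁻¹ * eval f (wi.take s)) +
            wlen f ((eval f (wi.take s))⁻¹ * eval f (w'.take s)) := wlen_mul_le f hs0 _ _
        _ ≤ i * k₁ + k₁ := Nat.add_le_add (hwit s) (hft' s)
        _ = (i + 1) * k₁ := by ring
  obtain ⟨wm, hwm, hwmv, hwmt⟩ := claim u₀.length le_rfl
  have hlast : eval f (wm ++ (none : Option (A × Bool)).toList) = eval f v := by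
    show eval f (wm ++ []) = eval f v
    rw [List.append_nil, hwmv, List.take_length]
    exact hval.symm
  have hft'' := hft none wm hwm v hv hlast
  obtain ⟨h, hH, hk⟩ := hq w hw (hwval ▸ hh₀) (w.take t) (List.take_prefix t w)
  refine ⟨h, hH, ?_⟩
  have hdecomp : h⁻¹ * eval f (v.take t)
      = (h⁻¹ * eval f (w.take t)) * (((eval f (w.take t))⁻¹ * eval f (wm.take t)) *
        ((eval f (wm.take t))⁻¹ * eval f (v.take t))) := by group
  rw [hdecomp]
  calc wlen f _ ≤ wlen f (h⁻¹ * eval f (w.take t)) +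
        wlen f (((eval f (w.take t))⁻¹ * eval f (wm.take t)) *
          ((eval f (wm.take t))⁻¹ * eval f (v.take t))) := wlen_mul_le f hs0 _ _
    _ ≤ k + (wlen f ((eval f (w.take t))⁻¹ * eval f (wm.take t)) +
        wlen f ((eval f (wm.take t))⁻¹ * eval f (v.take t))) :=
          Nat.add_le_add hk (wlen_mul_le f hs0 _ _)
    _ ≤ k + (u₀.length * k₁ + k₁) := by
        exact Nat.add_le_add_left (Nat.add_le_add (hwmt t) (hft'' t)) k
    _ = k + (u₀.length + 1) * k₁ := by ring


theorem coset_regular (f : A → G) (L : Set (List (A × Bool)))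
    (hL : Language.IsRegular (L : Language (A × Bool)))
    (hs : ∀ g : G, ∃ w ∈ L, eval f w = g)
    (K : ℕ) (H : Subgroup G) (u₀ : List (A × Bool))
    (hpre : ∀ v ∈ L, ∀ h₀ ∈ H, eval f v = h₀ * eval f u₀ →
      ∀ t, ∃ h ∈ H, wlen f (h⁻¹ * eval f (v.take t)) ≤ K) :
    Language.IsRegular
      ({v | v ∈ L ∧ ∃ h ∈ H, eval f v = h * eval f u₀} : Language (A × Bool)) := by
  classical
  obtain ⟨σL, instL, ML, hML⟩ := hL
  have hs0 : ∀ g : G, ∃ w, eval f w = g := fun g => by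
    obtain ⟨w, _, hw⟩ := hs g; exact ⟨w, hw⟩
  set c : G → Set G := fun g => {x | ∃ h ∈ H, x = h * g} with hcdef
  have c_eq_of : ∀ {g g' : G}, g * g'⁻¹ ∈ H → c g = c g' := by
    intro g g' hm
    ext x
    constructor
    · rintro ⟨h, hh, rfl⟩; exact ⟨h * (g * g'⁻¹), H.mul_mem hh hm, by group⟩
    · rintro ⟨h, hh, rfl⟩
      refine ⟨h * (g * g'⁻¹)⁻¹, H.mul_mem hh (H.inv_mem hm), by group⟩
  have c_mem : ∀ {g g' : G}, c g = c g' → g * g'⁻¹ ∈ H := by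
    intro g g' hEq
    have hg : g ∈ c g := ⟨1, H.one_mem, by simp⟩
    rw [hEq] at hg
    obtain ⟨h, hh, hx⟩ := hg
    have hgh : g * g'⁻¹ = h := by rw [hx]; group
    rwa [hgh]
  have c_step : ∀ (g s : G), (fun y => y * s) '' c g = c (g * s) := by
    intro g s
    ext x
    constructor
    · rintro ⟨y, ⟨h, hh, rfl⟩, rfl⟩; exact ⟨h, hh, by group⟩
    · rintro ⟨h, hh, rfl⟩; exact ⟨h * g, ⟨h, hh, rfl⟩, by group⟩
  set fhat : A × Bool → G := fun p => if p.2 then f p.1 else (f p.1)⁻¹ with hfhat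
  have eval_singleton : ∀ a : A × Bool, eval f [a] = fhat a := by
    intro a; simp [eval, hfhat]
  have eval_app_sing : ∀ (v : List (A × Bool)) (a : A × Bool),
      eval f (v ++ [a]) = eval f v * fhat a := by
    intro v a; rw [eval_append, eval_singleton]
  set B : Set G := {g : G | wlen f g ≤ K} with hBdef
  have hB : B.Finite := ball_finite f hs0 K
  set C : Set (Set G) := c '' B with hCdef
  have hC : C.Finite := hB.image c
  haveI instC : Fintype ↥C := hC.fintype
  have h1B : (1 : G) ∈ B := by
    have : wlen f (1 : G) ≤ ([] : List (A × Bool)).length := wlen_le f (eval_nil f)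
    simpa [hBdef] using this.trans (Nat.zero_le K)
  have h1C : c 1 ∈ C := ⟨1, h1B, rfl⟩
  set step2 : Option ↥C → (A × Bool) → Option ↥C := fun so a =>
    so.bind fun S =>
      if h : ((fun y => y * fhat a) '' (S : Set G)) ∈ C then some ⟨_, h⟩ else none
    with hstep2
  set M2 : DFA (A × Bool) (σL × Option ↥C) :=
    { step := fun p a => (ML.step p.1 a, step2 p.2 a)
      start := (ML.start, some ⟨c 1, h1C⟩)
      accept := {p | p.1 ∈ ML.accept ∧ p.2.map Subtype.val = some (c (eval f u₀))} }
    with hM2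
  -- first component
  have fst_eval : ∀ (v : List (A × Bool)) (p : σL × Option ↥C),
      (M2.evalFrom p v).1 = ML.evalFrom p.1 v := by
    intro v
    induction v with
    | nil => intro p; rfl
    | cons a v ih => intro p; exact ih _
  have fst_eval' : ∀ v : List (A × Bool), (M2.eval v).1 = ML.eval v :=
    fun v => fst_eval v M2.start
  -- snd soundness
  have snd_sound : ∀ (v : List (A × Bool)) (S' : ↥C),
      (M2.eval v).2 = some S' → (S' : Set G) = c (eval f v) := by
    intro v
    induction v using List.reverseRec with
    | nil =>
      intro S' hS'
      have : (M2.eval []).2 = some ⟨c 1, h1C⟩ := rfl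
      rw [this] at hS'
      have := Option.some_injective _ hS'
      rw [← this, eval_nil]
    | append_singleton v a ih =>
      intro S' hS'
      rw [DFA.eval_append_singleton] at hS'
      have hstep : step2 (M2.eval v).2 a = some S' := hS'
      cases h2 : (M2.eval v).2 with
      | none =>
        rw [h2] at hstep
        exact absurd hstep (by simp [hstep2])
      | some S =>
        rw [h2] at hstep
        simp only [hstep2, Option.bind_some] at hstep
        by_cases him : ((fun y => y * fhat a) '' (S : Set G)) ∈ C
        · rw [dif_pos him] at hstep
          have hv' := Option.some_injective _ hstep
          have hval : (S' : Set G) = (fun y => y * fhat a) '' (S : Set G) := by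
            rw [← hv']
          rw [hval, ih S h2, c_step, eval_app_sing]
        · rw [dif_neg him] at hstep; exact absurd hstep (by simp)
  -- snd completeness
  have snd_complete : ∀ v : List (A × Bool),
      (∀ t, c (eval f (v.take t)) ∈ C) →
      ∃ hm : c (eval f v) ∈ C, (M2.eval v).2 = some ⟨c (eval f v), hm⟩ := by
    intro v
    induction v using List.reverseRec with
    | nil =>
      intro _
      refine ⟨by rw [eval_nil]; exact h1C, ?_⟩
      rfl
    | append_singleton v a ih =>
      intro ht
      have ht' : ∀ t, c (eval f (v.take t)) ∈ C := by
        intro t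
        rcases le_or_gt t v.length with h | h
        · have hta : (v ++ [a]).take t = v.take t := List.take_append_of_le_length h
          rw [← hta]; exact ht t
        · have h1 : v.take t = v := List.take_of_length_le (le_of_lt h)
          have h2 : (v ++ [a]).take v.length = v := by
            rw [List.take_append_of_le_length le_rfl, List.take_length]
          have := ht v.length
          rw [h2] at this
          rwa [h1]
      obtain ⟨hm, heq⟩ := ih ht'
      have himC : ((fun y => y * fhat a) '' (c (eval f v))) ∈ C := by
        rw [c_step, ← eval_app_sing]
        have := ht (v ++ [a]).length
        rwa [List.take_length] at this
      have hm' : c (eval f (v ++ [a])) ∈ C := by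
        rw [eval_app_sing, ← c_step]; exact himC
      refine ⟨hm', ?_⟩
      rw [DFA.eval_append_singleton]
      show step2 (M2.eval v).2 a = _
      rw [heq]
      simp only [hstep2, Option.bind_some]
      rw [dif_pos himC]
      congr 1
      apply Subtype.ext
      show (fun y => y * fhat a) '' c (eval f v) = c (eval f (v ++ [a]))
      rw [c_step, eval_app_sing]
  -- accepts
  have haccepts : M2.accepts = {v | v ∈ L ∧ ∃ h ∈ H, eval f v = h * eval f u₀} := by
    ext v
    rw [DFA.mem_accepts]
    constructor
    · rintro ⟨h1, h2⟩
      have hvL : v ∈ L := by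
        have hv2 : v ∈ ML.accepts := by rw [DFA.mem_accepts, ← fst_eval']; exact h1
        rw [hML] at hv2; exact hv2
      refine ⟨hvL, ?_⟩
      cases h2' : (M2.eval v).2 with
      | none =>
        rw [h2'] at h2
        exact absurd h2 (by simp)
      | some S' =>
        rw [h2'] at h2
        have h2'' : some (S' : Set G) = some (c (eval f u₀)) := h2
        have hval := Option.some_injective _ h2
        have hsound := snd_sound v S' h2'
        have hcc : c (eval f v) = c (eval f u₀) := by rw [← hsound, hval]
        have hmem := c_mem hcc
        exact ⟨eval f v * (eval f u₀)⁻¹, hmem, by group⟩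
    · rintro ⟨hvL, h₀, hh₀, hval⟩
      have hCt : ∀ t, c (eval f (v.take t)) ∈ C := by
        intro t
        obtain ⟨h, hh, hwl⟩ := hpre v hvL h₀ hh₀ hval t
        have hbB : h⁻¹ * eval f (v.take t) ∈ B := hwl
        refine ⟨h⁻¹ * eval f (v.take t), hbB, ?_⟩
        apply c_eq_of
        have : (h⁻¹ * eval f (v.take t)) * (eval f (v.take t))⁻¹ = h⁻¹ := by group
        rw [this]
        exact H.inv_mem hh
      obtain ⟨hm, heq⟩ := snd_complete v hCt
      constructor
      · show (M2.eval v).1 ∈ ML.accept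
        rw [fst_eval']
        have hmem : v ∈ ML.accepts := by rw [hML]; exact hvL
        exact hmem
      · show (M2.eval v).2.map Subtype.val = some (c (eval f u₀))
        rw [heq]
        show some (c (eval f v)) = some (c (eval f u₀))
        congr 1
        apply c_eq_of
        have : eval f v * (eval f u₀)⁻¹ = h₀ := by rw [hval]; group
        rw [this]; exact hh₀
  -- reindex to Type 0
  letI := instL
  let e : (σL × Option ↥C) ≃ (σL × Option (Fin (Fintype.card ↥C))) :=
    (Equiv.refl σL).prodCongr (Fintype.equivFin ↥C).optionCongr
  refine ⟨σL × Option (Fin (Fintype.card ↥C)), inferInstance, DFA.reindex e M2, ?_⟩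
  rw [DFA.accepts_reindex]
  exact haccepts

end Stmt9Aux

set_option maxHeartbeats 1000000 in
/-- if (G, μ) has an automatic structure with language L, H ≤ G is
L-quasi-convex, and u₀ is any word, then the set of all L-representatives of the
elements of the right coset H·μ(u₀) is regular. -/
theorem stmt9 (f : A → G) (L : Set (List (A × Bool)))
    (hAut : AutomaticStructure f L)
    (H : Subgroup G) (hqc : ∃ k, QCW f L H k) (u₀ : List (A × Bool)) :
    Language.IsRegular
      ({v | v ∈ L ∧ ∃ h ∈ H, eval f v = h * eval f u₀} : Language (A × Bool)) := by
  obtain ⟨k, hq⟩ := hqc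
  obtain ⟨hLreg, hred, hsurj, hconvreg⟩ := hAut
  obtain ⟨k₁, hft⟩ := Stmt9Aux.ft_all f L hconvreg
  exact Stmt9Aux.coset_regular f L hLreg hsurj (k + (u₀.length + 1) * k₁) H u₀
    (fun v hv h₀ hh₀ hval t =>
      Stmt9Aux.prefix_near f L H hsurj hq hft u₀ hv hh₀ hval t)
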